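/- Let Y, X* be random variables on a finite probability space, Δ a binary indicator with φ(y,x) := P(Δ=1 | Y=y, X*=x) > 0, and ω(y,x) := P(Δ=1 | X*=x)/φ(y,x). Then for every x with P(X*=x, Δ=1)>0, E[Y | X*=x] = E[Y · ω(Y, x) | Δ=1, X*=x]. -/

import Mathlib

open scoped BigOperators
attribute [local instance] Classical.propDecidable

/-- Probability of an event under weight function `p` on a finite space. -/
noncomputable def Pr {Ω : Type*} [Fintype Ω] (p : Ω → ℝ) (A : Set Ω) : ℝ :=
  ∑ ω, if ω ∈ A then p ω else 0

/-- Conditional probability of `A` given `B`. -/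
noncomputable def condPr {Ω : Type*} [Fintype Ω] (p : Ω → ℝ) (A B : Set Ω) : ℝ :=
  Pr p (A ∩ B) / Pr p B

/-- Conditional expectation of `f` given event `B`. -/
noncomputable def condE {Ω : Type*} [Fintype Ω] (p : Ω → ℝ) (f : Ω → ℝ) (B : Set Ω) : ℝ :=
  (∑ ω, if ω ∈ B then p ω * f ω else 0) / Pr p B

/-- Expectation of `f`. -/
noncomputable def Ex {Ω : Type*} [Fintype Ω] (p : Ω → ℝ) (f : Ω → ℝ) : ℝ :=
  ∑ ω, p ω * f ω

private lemma key_fiber {Ω : Type*} [Fintype Ω] (Y : Ω → ℝ) (F : Ω → ℝ) (G : ℝ → ℝ) :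
    ∑ ω, F ω * G (Y ω)
      = ∑ y ∈ Finset.univ.image Y,
          (∑ ω ∈ Finset.univ.filter (fun ω => Y ω = y), F ω) * G y := by
  classical
  rw [← Finset.sum_fiberwise_of_maps_to
      (fun ω _ => Finset.mem_image_of_mem Y (Finset.mem_univ ω))
      (fun ω => F ω * G (Y ω))]
  refine Finset.sum_congr rfl fun y _ => ?_
  rw [Finset.sum_mul]
  refine Finset.sum_congr rfl fun ω hω => ?_
  rw [(Finset.mem_filter.mp hω).2]

/-- FPW representation of the regression function:
`E[Y | X*=x] = E[Y · ω(Y,x) | Δ=1, X*=x]`. -/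
theorem stmt2 {Ω β : Type*} [Fintype Ω]
    (p : Ω → ℝ) (hp : ∀ ω, 0 ≤ p ω) (hsum : ∑ ω, p ω = 1)
    (Y : Ω → ℝ) (X : Ω → β) (D : Ω → Bool)
    (φ : ℝ → β → ℝ)
    (hφdef : ∀ y x, φ y x =
      condPr p {ω' | D ω' = true} {ω' | Y ω' = y ∧ X ω' = x})
    (hφpos : ∀ y x, 0 < Pr p {ω' | Y ω' = y ∧ X ω' = x} → 0 < φ y x)
    (w : ℝ → β → ℝ)
    (hwdef : ∀ y x, w y x = condPr p {ω' | D ω' = true} {ω' | X ω' = x} / φ y x) :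
    ∀ x, 0 < Pr p {ω' | X ω' = x ∧ D ω' = true} →
      condE p Y {ω' | X ω' = x}
        = condE p (fun ω' => Y ω' * w (Y ω') x) {ω' | D ω' = true ∧ X ω' = x} := by
  intro x hx
  classical
  -- basic quantities
  have hSd_eq : Pr p {ω' | D ω' = true ∧ X ω' = x}
      = Pr p {ω' | X ω' = x ∧ D ω' = true} := by
    unfold Pr
    refine Finset.sum_congr rfl fun ω _ => ?_
    by_cases h1 : D ω = true <;> by_cases h2 : X ω = x <;>
      simp [Set.mem_setOf_eq, h1, h2]
  have hSd_eq' : Pr p ({ω' | D ω' = true} ∩ {ω' | X ω' = x})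
      = Pr p {ω' | X ω' = x ∧ D ω' = true} := by
    unfold Pr
    refine Finset.sum_congr rfl fun ω _ => ?_
    by_cases h1 : D ω = true <;> by_cases h2 : X ω = x <;>
      simp [Set.mem_setOf_eq, Set.mem_inter_iff, h1, h2]
  set S := Pr p {ω' | X ω' = x} with hSdef
  set Sd := Pr p {ω' | X ω' = x ∧ D ω' = true} with hSddef
  have hS_pos : 0 < S := by
    refine lt_of_lt_of_le hx (Finset.sum_le_sum fun ω _ => ?_)
    by_cases h1 : X ω = x ∧ D ω = true
    · simp [Set.mem_setOf_eq, h1, h1.1]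
    · by_cases h2 : X ω = x <;> by_cases h3 : D ω = true <;>
        simp_all [Set.mem_setOf_eq, hp ω]
  -- A and B
  set A : ℝ → ℝ := fun y => Pr p {ω' | Y ω' = y ∧ X ω' = x} with hAdef
  set Bf : ℝ → ℝ := fun y =>
    Pr p ({ω' | D ω' = true} ∩ {ω' | Y ω' = y ∧ X ω' = x}) with hBdef
  have hBA : ∀ y, 0 ≤ Bf y ∧ Bf y ≤ A y := by
    intro y
    constructor
    · refine Finset.sum_nonneg fun ω _ => ?_
      by_cases h : ω ∈ ({ω' | D ω' = true} ∩ {ω' | Y ω' = y ∧ X ω' = x}) <;>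
        simp [h, hp ω]
    · refine Finset.sum_le_sum fun ω _ => ?_
      by_cases h1 : D ω = true <;> by_cases h2 : Y ω = y <;> by_cases h3 : X ω = x <;>
        simp [Set.mem_setOf_eq, Set.mem_inter_iff, h1, h2, h3, hp ω]
  have hA_nonneg : ∀ y, 0 ≤ A y := by
    intro y
    refine Finset.sum_nonneg fun ω _ => ?_
    by_cases h : ω ∈ ({ω' | Y ω' = y ∧ X ω' = x}) <;> simp [h, hp ω]
  -- φ in terms of A, B
  have hφAB : ∀ y, φ y x = Bf y / A y := fun y => hφdef y x
  -- per-y identity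
  have hperY : ∀ y, w y x * Bf y = (Sd / S) * A y := by
    intro y
    by_cases hA0 : A y = 0
    · have hB0 : Bf y = 0 := le_antisymm (hA0 ▸ (hBA y).2) (hBA y).1
      simp [hA0, hB0]
    · have hApos : 0 < A y := lt_of_le_of_ne (hA_nonneg y) (Ne.symm hA0)
      have hφpos' : 0 < φ y x := hφpos y x hApos
      have hφne : φ y x ≠ 0 := ne_of_gt hφpos'
      have hw : w y x = (Sd / S) / φ y x := by
        rw [hwdef y x]
        congr 1
        unfold condPr
        rw [hSd_eq']
      have hB : Bf y = φ y x * A y := by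
        rw [hφAB y]; field_simp
      rw [hw, hB]
      field_simp
  -- main sum identity
  have main : (∑ ω, if ω ∈ {ω' | D ω' = true ∧ X ω' = x}
        then p ω * (Y ω * w (Y ω) x) else 0)
      = (Sd / S) * ∑ ω, if ω ∈ {ω' | X ω' = x} then p ω * Y ω else 0 := by
    have l1 : (∑ ω, if ω ∈ {ω' | D ω' = true ∧ X ω' = x}
          then p ω * (Y ω * w (Y ω) x) else 0)
        = ∑ ω, (if D ω = true ∧ X ω = x then p ω else 0) * (Y ω * w (Y ω) x) := by
      refine Finset.sum_congr rfl fun ω _ => ?_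
      by_cases h : D ω = true ∧ X ω = x <;> simp [Set.mem_setOf_eq, h]
    have l2 : (∑ ω, if ω ∈ {ω' | X ω' = x} then p ω * Y ω else 0)
        = ∑ ω, (if X ω = x then p ω else 0) * Y ω := by
      refine Finset.sum_congr rfl fun ω _ => ?_
      by_cases h : X ω = x <;> simp [Set.mem_setOf_eq, h]
    rw [l1, l2,
      key_fiber Y (fun ω => if D ω = true ∧ X ω = x then p ω else 0)
        (fun y => y * w y x),
      key_fiber Y (fun ω => if X ω = x then p ω else 0) (fun y => y),
      Finset.mul_sum]
    refine Finset.sum_congr rfl fun y _ => ?_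
    have hBsum : (∑ ω ∈ Finset.univ.filter (fun ω => Y ω = y),
        if D ω = true ∧ X ω = x then p ω else 0) = Bf y := by
      rw [Finset.sum_filter]
      refine Finset.sum_congr rfl fun ω _ => ?_
      by_cases h1 : D ω = true <;> by_cases h2 : Y ω = y <;> by_cases h3 : X ω = x <;>
        simp [Set.mem_setOf_eq, Set.mem_inter_iff, h1, h2, h3]
    have hAsum : (∑ ω ∈ Finset.univ.filter (fun ω => Y ω = y),
        if X ω = x then p ω else 0) = A y := by
      rw [Finset.sum_filter]
      refine Finset.sum_congr rfl fun ω _ => ?_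
      by_cases h2 : Y ω = y <;> by_cases h3 : X ω = x <;>
        simp [Set.mem_setOf_eq, h2, h3]
    rw [hBsum, hAsum]
    linear_combination y * hperY y
  -- conclude
  simp only [condE]
  rw [main, hSd_eq]
  rw [div_eq_div_iff (ne_of_gt hS_pos) (ne_of_gt hx)]
  field_simp
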